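/- Let E/F be a finite separable field extension of degree N, and let L be a normal closure of E over F. If the Galois group Gal(L/F) is isomorphic to the symmetric group S_N, then the extension E/F has no nontrivial proper sub-extension: every intermediate field K with F ⊆ K ⊆ E satisfies K = F or K = E. -/

import Mathlib

open IntermediateField

/-- Point stabilizers are maximal subgroups of the symmetric group. -/
lemma perm_stab_maximal {α : Type*} (a : α) (H : Subgroup (Equiv.Perm α))
    (hle : MulAction.stabilizer (Equiv.Perm α) a ≤ H) :
    H = MulAction.stabilizer (Equiv.Perm α) a ∨ H = ⊤ := by
  classical
  by_cases hH : H ≤ MulAction.stabilizer (Equiv.Perm α) a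
  · exact Or.inl (le_antisymm hH hle)
  · right
    obtain ⟨g, hgH, hga⟩ := SetLike.not_le_iff_exists.mp hH
    have hga' : g a ≠ a := by
      simpa [MulAction.mem_stabilizer_iff, Equiv.Perm.smul_def] using hga
    rw [eq_top_iff]
    intro σ _
    have key : ∀ c : α, ∃ h : Equiv.Perm α, h ∈ H ∧ h a = c := by
      intro c
      by_cases h1 : c = a
      · exact ⟨1, one_mem H, by simp [h1]⟩
      by_cases h2 : c = g a
      · exact ⟨g, hgH, h2.symm⟩
      · refine ⟨Equiv.swap (g a) c * g, ?_, ?_⟩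
        · refine H.mul_mem (hle ?_) hgH
          simp only [MulAction.mem_stabilizer_iff, Equiv.Perm.smul_def]
          exact Equiv.swap_apply_of_ne_of_ne (Ne.symm hga') fun h => h1 h.symm
        · simp [Equiv.Perm.mul_apply, Equiv.swap_apply_left]
    obtain ⟨h, hhH, hha⟩ := key (σ a)
    have hmem : h⁻¹ * σ ∈ MulAction.stabilizer (Equiv.Perm α) a := by
      simp only [MulAction.mem_stabilizer_iff, Equiv.Perm.smul_def, Equiv.Perm.mul_apply]
      rw [← hha, Equiv.Perm.inv_def, Equiv.symm_apply_apply]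
    have : h * (h⁻¹ * σ) ∈ H := H.mul_mem hhH (hle hmem)
    simpa using this

/-- Let `E/F` be a finite separable field extension of degree `N` and let `L`
be a normal closure of `E` over `F`.  If `Gal(L/F)` is isomorphic to the symmetric group `S_N`,
then `E/F` has no nontrivial proper sub-extension: every intermediate field `K` with
`F ⊆ K ⊆ E` equals `F` or `E`. -/
theorem stmt_2
    (F E L : Type) [Field F] [Field E] [Field L]
    [Algebra F E] [Algebra F L] [Algebra E L] [IsScalarTower F E L]
    (N : ℕ)
    [FiniteDimensional F E] [Algebra.IsSeparable F E]
    (hdeg : Module.finrank F E = N)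
    [Normal F L] (hclosure : normalClosure F E L = ⊤)
    (hGal : Nonempty ((L ≃ₐ[F] L) ≃* Equiv.Perm (Fin N))) :
    ∀ K : IntermediateField F E, K = ⊥ ∨ K = ⊤ := by
  intro K
  classical
  set ι : E →ₐ[F] L := IsScalarTower.toAlgHom F E L with hιdef
  -- L is finite dimensional over F
  have hfd : FiniteDimensional F L := by
    have h1 : FiniteDimensional F (normalClosure F E L) := inferInstance
    rw [hclosure] at h1
    exact (IntermediateField.topEquiv (F := F) (E := L)).toLinearEquiv.finiteDimensional
  -- L is separable over F
  have hsep : Algebra.IsSeparable F L := by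
    have h1 : Algebra.IsSeparable F (normalClosure F E L) := by
      rw [normalClosure_def]
      haveI : ∀ f : E →ₐ[F] L, Algebra.IsSeparable F f.fieldRange := fun f =>
        AlgEquiv.Algebra.isSeparable (AlgEquiv.ofInjectiveField f)
      exact IntermediateField.isSeparable_iSup F L
    rw [hclosure] at h1
    exact AlgEquiv.Algebra.isSeparable (IntermediateField.topEquiv (F := F) (E := L))
  have hGalois : IsGalois F L := ⟨⟩
  -- the number of embeddings of E into L is N
  have hN : Nat.card (E →ₐ[F] L) = N := by
    rw [← hdeg, ← Field.finSepDegree_eq_finrank_of_isSeparable F E]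
    refine (Field.finSepDegree_eq_of_adjoin_splits F E L (IntermediateField.adjoin_univ F E)
      (fun s _ => ⟨Algebra.IsIntegral.isIntegral s, ?_⟩)).symm
    rw [← minpoly.algHom_eq ι ι.injective s]
    exact Normal.splits ‹Normal F L› (ι s)
  -- the permutation representation of Gal(L/F) on embeddings
  let φ : (L ≃ₐ[F] L) →* Equiv.Perm (E →ₐ[F] L) :=
    { toFun := fun σ =>
        { toFun := fun f => σ.toAlgHom.comp f
          invFun := fun f => σ.symm.toAlgHom.comp f
          left_inv := fun f => by ext x; simp
          right_inv := fun f => by ext x; simp }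
      map_one' := by
        ext f x
        simp
      map_mul' := fun σ τ => by
        ext f x
        simp }
  have hφapp : ∀ (σ : L ≃ₐ[F] L) (f : E →ₐ[F] L), φ σ f = σ.toAlgHom.comp f := fun _ _ => rfl
  -- φ is injective
  have hinj : Function.Injective φ := by
    rw [injective_iff_map_eq_one]
    intro σ hσ
    have hfix : ∀ f : E →ₐ[F] L, σ.toAlgHom.comp f = f := fun f => Equiv.ext_iff.mp hσ f
    have hinv : ∀ x ∈ AlgHom.equalizer σ.toAlgHom (AlgHom.id F L),
        x⁻¹ ∈ AlgHom.equalizer σ.toAlgHom (AlgHom.id F L) := by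
      intro x hx
      have hx' : σ x = x := hx
      show σ x⁻¹ = x⁻¹
      rw [map_inv₀, hx']
    have hle : normalClosure F E L ≤
        (AlgHom.equalizer σ.toAlgHom (AlgHom.id F L)).toIntermediateField hinv := by
      rw [normalClosure_le_iff]
      rintro f x ⟨y, rfl⟩
      exact AlgHom.congr_fun (hfix f) y
    rw [hclosure] at hle
    ext x
    exact hle (IntermediateField.mem_top (x := x))
  -- φ is bijective by counting
  have hNpos : 0 < N := hdeg ▸ Module.finrank_pos
  have hfinEmb : Finite (E →ₐ[F] L) := (Nat.card_pos_iff.mp (hN ▸ hNpos)).2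
  have hcardG : Nat.card (L ≃ₐ[F] L) = N.factorial := by
    obtain ⟨e⟩ := hGal
    rw [Nat.card_congr e.toEquiv, Nat.card_eq_fintype_card, Fintype.card_perm, Fintype.card_fin]
  have hcardP : Nat.card (Equiv.Perm (E →ₐ[F] L)) = N.factorial := by
    have : Fintype (E →ₐ[F] L) := Fintype.ofFinite _
    rw [Nat.card_eq_fintype_card, Fintype.card_perm, ← Nat.card_eq_fintype_card, hN]
  have hbij : Function.Bijective φ := by
    rw [Nat.bijective_iff_injective_and_card]
    exact ⟨hinj, by rw [hcardG, hcardP]⟩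
  let ψ : (L ≃ₐ[F] L) ≃* Equiv.Perm (E →ₐ[F] L) := MulEquiv.ofBijective φ hbij
  have hψapp : ∀ (σ : L ≃ₐ[F] L) (f : E →ₐ[F] L), ψ σ f = σ.toAlgHom.comp f := fun _ _ => rfl
  -- intermediate fields of L
  set E' : IntermediateField F L := ι.fieldRange with hE'def
  set K' : IntermediateField F L := K.map ι with hK'def
  have hKE : K' ≤ E' := by
    rintro x ⟨y, _, rfl⟩
    exact ⟨y, rfl⟩
  set HE : Subgroup (L ≃ₐ[F] L) := IntermediateField.fixingSubgroup E' with hHEdef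
  set HK : Subgroup (L ≃ₐ[F] L) := IntermediateField.fixingSubgroup K' with hHKdef
  have hmemHE : ∀ σ : L ≃ₐ[F] L, σ ∈ HE ↔ σ.toAlgHom.comp ι = ι := by
    intro σ
    rw [hHEdef, IntermediateField.mem_fixingSubgroup_iff]
    constructor
    · intro h; ext y; exact h (ι y) ⟨y, rfl⟩
    · rintro h x ⟨y, rfl⟩; exact AlgHom.congr_fun h y
  have hHEK : HE ≤ HK := by
    intro σ hσ
    rw [IntermediateField.mem_fixingSubgroup_iff] at hσ ⊢
    intro x hx
    exact hσ x (hKE hx)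
  -- the image of HE under ψ is the stabilizer of ι
  have hmapHE : Subgroup.map ψ.toMonoidHom HE
      = MulAction.stabilizer (Equiv.Perm (E →ₐ[F] L)) ι := by
    ext π
    constructor
    · rintro ⟨σ, hσ, rfl⟩
      show ψ σ • ι = ι
      rw [Equiv.Perm.smul_def, hψapp]
      exact (hmemHE σ).mp hσ
    · intro hπ
      have hπ' : π ι = ι := by
        have := hπ
        rwa [MulAction.mem_stabilizer_iff, Equiv.Perm.smul_def] at this
      have hσ : ψ.symm π ∈ HE := by
        rw [hmemHE, ← hψapp (ψ.symm π) ι, ψ.apply_symm_apply]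
        exact hπ'
      exact ⟨ψ.symm π, hσ, by simp⟩
  -- apply maximality of the stabilizer
  have hstab : MulAction.stabilizer (Equiv.Perm (E →ₐ[F] L)) ι ≤ Subgroup.map ψ.toMonoidHom HK :=
    hmapHE ▸ Subgroup.map_mono hHEK
  rcases perm_stab_maximal ι (Subgroup.map ψ.toMonoidHom HK) hstab with hcase | hcase
  · -- HK = HE  ⇒  K = ⊤
    right
    rw [← hmapHE] at hcase
    have hHKE : HK = HE := Subgroup.map_injective (f := ψ.toMonoidHom) ψ.injective hcase
    have h1 : IntermediateField.fixedField HK = K' := IsGalois.fixedField_fixingSubgroup K'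
    have h2 : IntermediateField.fixedField HE = E' := IsGalois.fixedField_fixingSubgroup E'
    have hK'E' : K' = E' := by rw [← h1, hHKE, h2]
    have : K.map ι = (⊤ : IntermediateField F E).map ι := by
      rw [← hK'def, hK'E', hE'def, AlgHom.fieldRange_eq_map]
    exact IntermediateField.map_injective ι this
  · -- HK = ⊤  ⇒  K = ⊥
    left
    have hHKtop : HK = ⊤ := by
      apply Subgroup.map_injective (f := ψ.toMonoidHom) ψ.injective
      rw [hcase, Subgroup.map_top_of_surjective _ ψ.surjective]
    have h1 : IntermediateField.fixedField HK = K' := IsGalois.fixedField_fixingSubgroup K'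
    have h2 : IntermediateField.fixedField (⊤ : Subgroup (L ≃ₐ[F] L)) = ⊥ := by
      conv_lhs => rw [← IntermediateField.fixingSubgroup_bot (F := F) (E := L)]
      exact IsGalois.fixedField_fixingSubgroup ⊥
    have hK'bot : K' = ⊥ := by rw [← h1, hHKtop, h2]
    have : K.map ι = (⊥ : IntermediateField F E).map ι := by
      rw [← hK'def, hK'bot, IntermediateField.map_bot]
    exact IntermediateField.map_injective ι this
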